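/- For every a > 0 and every t > 0, one has ∫₀^t erf( a/√τ ) dτ = (2a² + t)·erf( a/√t ) + 2a·√(t/π)·exp(−a²/t) − 2a². -/

import Mathlib

open Real MeasureTheory Set Filter Topology intervalIntegral

noncomputable def erf (a : ℝ) : ℝ := (2 / Real.sqrt π) * ∫ b in (0:ℝ)..a, Real.exp (-b^2)

lemma cont_gauss : Continuous fun b : ℝ => Real.exp (-b^2) := by continuity

lemma erf_hasDerivAt (x : ℝ) : HasDerivAt erf ((2 / Real.sqrt π) * Real.exp (-x^2)) x := by
  have h : HasDerivAt (fun u => ∫ b in (0:ℝ)..u, Real.exp (-b^2)) (Real.exp (-x^2)) x :=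
    intervalIntegral.integral_hasDerivAt_right (cont_gauss.intervalIntegrable 0 x)
      cont_gauss.aestronglyMeasurable.stronglyMeasurableAtFilter cont_gauss.continuousAt
  exact h.const_mul _

lemma integrable_gauss : IntegrableOn (fun b : ℝ => Real.exp (-b^2)) (Ioi 0) := by
  have := (integrable_exp_neg_mul_sq (b := 1) one_pos).integrableOn (s := Ioi 0)
  simpa using this

lemma tendsto_erf_atTop : Tendsto erf atTop (𝓝 1) := by
  have h := intervalIntegral_tendsto_integral_Ioi 0 integrable_gauss tendsto_id
  have h2 : Tendsto erf atTop (𝓝 ((2 / Real.sqrt π) * ∫ b in Ioi (0:ℝ), Real.exp (-b^2))) :=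
    h.const_mul _
  have hI : ∫ b in Ioi (0:ℝ), Real.exp (-b^2) = Real.sqrt π / 2 := by
    have := integral_gaussian_Ioi 1
    simpa using this
  rw [hI] at h2
  convert h2 using 2
  rw [div_mul_div_comm, eq_div_iff (by positivity)]
  ring

lemma erf_nonneg {x : ℝ} (hx : 0 ≤ x) : 0 ≤ erf x := by
  apply mul_nonneg (by positivity)
  apply intervalIntegral.integral_nonneg hx
  intro u _; positivity

lemma erf_le_one {x : ℝ} (hx : 0 ≤ x) : erf x ≤ 1 := by
  have h1 : ∫ b in (0:ℝ)..x, Real.exp (-b^2) ≤ ∫ b in Ioi (0:ℝ), Real.exp (-b^2) := by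
    rw [intervalIntegral.integral_of_le hx]
    refine setIntegral_mono_set integrable_gauss ?_ (ae_of_all _ Ioc_subset_Ioi_self)
    filter_upwards with u; positivity
  have hI : ∫ b in Ioi (0:ℝ), Real.exp (-b^2) = Real.sqrt π / 2 := by
    simpa using integral_gaussian_Ioi 1
  calc erf x ≤ (2 / Real.sqrt π) * (Real.sqrt π / 2) :=
        mul_le_mul_of_nonneg_left (hI ▸ h1) (by positivity)
    _ = 1 := by field_simp

lemma continuous_erf : Continuous erf := by
  have h : Differentiable ℝ erf := fun x => (erf_hasDerivAt x).differentiableAt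
  exact h.continuous

/-- `∫₀^t erf(a/√τ) dτ = (2a² + t) erf(a/√t) + 2a √(t/π) exp(−a²/t) − 2a²`
for `a > 0`, `t > 0`. -/
theorem integral_erf_pos (a t : ℝ) (ha : 0 < a) (ht : 0 < t) :
    ∫ τ in (0:ℝ)..t, erf (a / Real.sqrt τ)
    = (2*a^2 + t) * erf (a / Real.sqrt t)
      + 2*a * Real.sqrt (t/π) * Real.exp (-(a^2)/t) - 2*a^2 := by
  set F : ℝ → ℝ := fun u => (2*a^2 + u) * erf (a / Real.sqrt u)
      + (2*a) * ((Real.sqrt u / Real.sqrt π) * Real.exp (-(a^2)/u)) - 2*a^2 with hF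
  have hπ : (0:ℝ) < Real.sqrt π := Real.sqrt_pos.2 pi_pos
  -- derivative of F on (0, ∞)
  have hderiv : ∀ τ ∈ Ioo (0:ℝ) t, HasDerivAt F (erf (a / Real.sqrt τ)) τ := by
    intro τ hτ'
    have hτ : 0 < τ := hτ'.1
    have hs : 0 < Real.sqrt τ := Real.sqrt_pos.2 hτ
    have hss : Real.sqrt τ ^ 2 = τ := Real.sq_sqrt hτ.le
    have hsq : HasDerivAt Real.sqrt (1/(2*Real.sqrt τ)) τ := Real.hasDerivAt_sqrt hτ.ne'
    have hdiv : HasDerivAt (fun u => a / Real.sqrt u)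
        (a * (-(1/(2*Real.sqrt τ)) / Real.sqrt τ ^ 2)) τ := by
      have := (hsq.inv hs.ne').const_mul a
      simpa [div_eq_mul_inv] using this
    have hG : HasDerivAt (fun u => erf (a / Real.sqrt u))
        ((2 / Real.sqrt π) * Real.exp (-(a / Real.sqrt τ)^2)
          * (a * (-(1/(2*Real.sqrt τ)) / Real.sqrt τ ^ 2))) τ :=
      by have := (erf_hasDerivAt (a / Real.sqrt τ)).comp τ hdiv; exact this
    have hE : HasDerivAt (fun u => Real.exp (-(a^2)/u))
        (Real.exp (-(a^2)/τ) * ((a^2) / τ^2)) τ := by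
      have hinner : HasDerivAt (fun u : ℝ => -(a^2)/u) ((a^2)/τ^2) τ := by
        have := (hasDerivAt_inv hτ.ne').const_mul (-(a^2))
        have h2 : -(a ^ 2) * -(τ ^ 2)⁻¹ = a^2 / τ^2 := by field_simp
        simpa [div_eq_mul_inv, h2] using this
      simpa using hinner.exp
    have hS : HasDerivAt (fun u => Real.sqrt u / Real.sqrt π)
        ((1/(2*Real.sqrt τ)) / Real.sqrt π) τ := hsq.div_const _
    have h1 : HasDerivAt (fun u : ℝ => 2*a^2 + u) 1 τ := (hasDerivAt_id τ).const_add _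
    have hD : HasDerivAt F
        ((1 * erf (a / Real.sqrt τ)
          + (2*a^2 + τ) * ((2 / Real.sqrt π) * Real.exp (-(a / Real.sqrt τ)^2)
            * (a * (-(1/(2*Real.sqrt τ)) / Real.sqrt τ ^ 2))))
         + (2*a) * ((1/(2*Real.sqrt τ)) / Real.sqrt π * Real.exp (-(a^2)/τ)
            + (Real.sqrt τ / Real.sqrt π) * (Real.exp (-(a^2)/τ) * ((a^2) / τ^2)))) τ :=
      ((h1.mul hG).add ((hS.mul hE).const_mul (2*a))).sub_const _
    convert hD using 1
    have hexp : (-(a / Real.sqrt τ)^2) = -(a^2)/τ := by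
      rw [div_pow, hss]; ring
    rw [hexp]
    have hτne : τ ≠ 0 := hτ.ne'
    field_simp
    rw [← neg_div]
    linear_combination (a*Real.exp (-(a^2)/τ)*(-τ^2 - 2*a^2*(Real.sqrt τ^2+τ))) * hss
  -- integrability
  have hint : IntervalIntegrable (fun τ => erf (a / Real.sqrt τ)) volume 0 t := by
    rw [intervalIntegrable_iff_integrableOn_Ioc_of_le ht.le]
    have hm : AEStronglyMeasurable (fun τ => erf (a / Real.sqrt τ))
        (volume.restrict (Ioc 0 t)) :=
      ((continuous_erf.measurable.comp
        (measurable_const.div Real.continuous_sqrt.measurable)).aestronglyMeasurable).restrict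
    refine Integrable.mono' (g := fun _ => (1:ℝ)) (integrableOn_const measure_Ioc_lt_top.ne) hm ?_
    filter_upwards [ae_restrict_mem measurableSet_Ioc] with u hu
    have hpos : 0 ≤ a / Real.sqrt u := (div_pos ha (Real.sqrt_pos.2 hu.1)).le
    rw [Real.norm_eq_abs, abs_of_nonneg (erf_nonneg hpos)]
    exact erf_le_one hpos
  -- limit at 0⁺
  have h0 : Tendsto F (𝓝[>] (0:ℝ)) (𝓝 0) := by
    have hsq0 : Tendsto (fun u : ℝ => Real.sqrt u) (𝓝[>] 0) (𝓝[>] 0) := by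
      apply tendsto_nhdsWithin_of_tendsto_nhds_of_eventually_within
      · have := (Real.continuous_sqrt.tendsto 0).mono_left (nhdsWithin_le_nhds (s := Ioi (0:ℝ)))
        simpa using this
      · filter_upwards [self_mem_nhdsWithin] with u hu
        exact Real.sqrt_pos.2 hu
    have linv : Tendsto (fun u : ℝ => (Real.sqrt u)⁻¹) (𝓝[>] 0) atTop :=
      tendsto_inv_nhdsGT_zero.comp hsq0
    have l1 : Tendsto (fun u : ℝ => a / Real.sqrt u) (𝓝[>] 0) atTop := by
      simpa [div_eq_mul_inv] using linv.const_mul_atTop ha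
    have lerf : Tendsto (fun u : ℝ => erf (a / Real.sqrt u)) (𝓝[>] 0) (𝓝 1) :=
      tendsto_erf_atTop.comp l1
    have lexp : Tendsto (fun u : ℝ => Real.exp (-(a^2)/u)) (𝓝[>] 0) (𝓝 0) := by
      apply Real.tendsto_exp_atBot.comp
      have l2 : Tendsto (fun u : ℝ => (a^2) / u) (𝓝[>] 0) atTop := by
        have : Tendsto (fun u : ℝ => u⁻¹) (𝓝[>] (0:ℝ)) atTop := tendsto_inv_nhdsGT_zero
        simpa [div_eq_mul_inv] using this.const_mul_atTop (by positivity : (0:ℝ) < a^2)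
      have h3 := tendsto_neg_atBot_iff.mpr l2
      refine h3.congr fun u => ?_
      ring
    have lsq : Tendsto (fun u : ℝ => Real.sqrt u / Real.sqrt π) (𝓝[>] 0) (𝓝 0) := by
      have := (hsq0.mono_right nhdsWithin_le_nhds).div_const (Real.sqrt π)
      simpa using this
    have lcoef : Tendsto (fun u : ℝ => 2*a^2 + u) (𝓝[>] 0) (𝓝 (2*a^2)) := by
      have h4 : Continuous (fun u : ℝ => 2*a^2 + u) := continuous_const.add continuous_id
      have := (h4.tendsto 0).mono_left (nhdsWithin_le_nhds (s := Ioi (0:ℝ)))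
      simpa using this
    have : Tendsto F (𝓝[>] 0)
        (𝓝 ((2*a^2) * 1 + (2*a) * (0 * 0) - 2*a^2)) :=
      ((lcoef.mul lerf).add ((lsq.mul lexp).const_mul (2*a))).sub_const _
    convert this using 2
    ring
  -- limit at t⁻
  have hFt : Tendsto F (𝓝[<] t) (𝓝 (F t)) := by
    have hs : 0 < Real.sqrt t := Real.sqrt_pos.2 ht
    have hsq : HasDerivAt Real.sqrt (1/(2*Real.sqrt t)) t := Real.hasDerivAt_sqrt ht.ne'
    have hdiv : HasDerivAt (fun u => a / Real.sqrt u)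
        (a * (-(1/(2*Real.sqrt t)) / Real.sqrt t ^ 2)) t := by
      have := (hsq.inv hs.ne').const_mul a
      simpa [div_eq_mul_inv] using this
    have hG := (erf_hasDerivAt (a / Real.sqrt t)).comp t hdiv
    have hE : HasDerivAt (fun u => Real.exp (-(a^2)/u))
        (Real.exp (-(a^2)/t) * ((a^2) / t^2)) t := by
      have hinner : HasDerivAt (fun u : ℝ => -(a^2)/u) ((a^2)/t^2) t := by
        have := (hasDerivAt_inv ht.ne').const_mul (-(a^2))
        have h2 : -(a ^ 2) * -(t ^ 2)⁻¹ = a^2 / t^2 := by field_simp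
        simpa [div_eq_mul_inv, h2] using this
      simpa using hinner.exp
    have hS : HasDerivAt (fun u => Real.sqrt u / Real.sqrt π)
        ((1/(2*Real.sqrt t)) / Real.sqrt π) t := hsq.div_const _
    have h1 : HasDerivAt (fun u : ℝ => 2*a^2 + u) 1 t := (hasDerivAt_id t).const_add _
    have hD := ((h1.mul hG).add ((hS.mul hE).const_mul (2*a))).sub_const (2*a^2)
    exact hD.continuousAt.continuousWithinAt
  have key := intervalIntegral.integral_eq_sub_of_hasDerivAt_of_tendsto ht hderiv hint h0 hFt
  rw [key, hF]
  rw [Real.sqrt_div ht.le π]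
  ring
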